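/- Permutation Invariance Lemma (Lemma 3.1, consequence). Under the assumptions of the Permutation Invariance Lemma (weights q_{n,i} and θ_{n,i} ∈ [0,1] satisfying (n−i)·q_{n,i}·θ_{n,i} = i·q_{n,i+1}·(1−θ_{n,i+1}) for 1 ≤ i ≤ n−1, independent δ_i ~ Bernoulli(θ_{n,i}) independent of the data, ζ_{i,k} = δ_i X_k + (1−δ_i)Y_k, and f a permutation invariant tensor-valued function), for any functions g_k(X,Y), 1 ≤ k ≤ n: A_{σ,i}[ q_{n,i} ⟨ f(U_{σ,i}, ζ_{i,σ_i}), g_{σ_i}(X,Y) ⟩ ] = ⟨ A_{σ,i}[ q_{n,i} f(U_{σ,i}, ζ_{i,σ_i}) ], n⁻¹ Σ_{k=1}^n g_k(X,Y) ⟩, where A_{σ,i}(·) = n⁻¹ Σ_{i=1}^n (n!)⁻¹ Σ_σ E[ · | X, Y, σ, i ] (the conditional expectation being over the δ_i) and ⟨·,·⟩ is the vectorized inner product of tensors. -/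

import Mathlib

open MeasureTheory

namespace Stmt9

variable {n p m : ℕ}

def lindVec (x y : Fin n → Fin p → ℝ) (σ : Equiv.Perm (Fin n)) (i : Fin n)
    (z : Fin p → ℝ) : Fin n → Fin p → ℝ :=
  fun k => if k < i then x (σ k) else if k = i then z else y (σ k)

def PermInvariantT (f : (Fin n → Fin p → ℝ) → (Fin m → Fin p) → ℝ) : Prop :=
  ∀ (σ : Equiv.Perm (Fin n)) (v : Fin n → Fin p → ℝ), f (v ∘ σ) = f v

/-- config with `x`'s on slots of index `< j` and `y`'s elsewhere. -/
def cfg (x y : Fin n → Fin p → ℝ) (σ : Equiv.Perm (Fin n)) (j : ℕ) :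
    Fin n → Fin p → ℝ := fun k => if (k : ℕ) < j then x (σ k) else y (σ k)

lemma sum_perm_mulRight {α : Type*} [AddCommMonoid α] (τ : Equiv.Perm (Fin n))
    (Φ : Equiv.Perm (Fin n) → α) :
    ∑ σ : Equiv.Perm (Fin n), Φ (σ * τ) = ∑ σ : Equiv.Perm (Fin n), Φ σ :=
  Fintype.sum_equiv (Equiv.mulRight τ) _ _ (fun _ => rfl)

lemma sum_perm_apply_eq_zero (h : Fin n → ℝ) (hh : ∑ k, h k = 0) (a : Fin n) :
    ∑ σ : Equiv.Perm (Fin n), h (σ a) = 0 := by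
  have hconst : ∀ b : Fin n, ∑ σ : Equiv.Perm (Fin n), h (σ b) = ∑ σ : Equiv.Perm (Fin n), h (σ a) := by
    intro b
    have := sum_perm_mulRight (Equiv.swap a b) (fun σ => h (σ a))
    simpa [Equiv.Perm.mul_apply, Equiv.swap_apply_left] using this
  have htot : ∑ b : Fin n, ∑ σ : Equiv.Perm (Fin n), h (σ b) = 0 := by
    rw [Finset.sum_comm]
    refine Finset.sum_eq_zero fun σ _ => ?_
    rw [Equiv.sum_comp σ h, hh]
  have htot' : (n : ℝ) * ∑ σ : Equiv.Perm (Fin n), h (σ a) = 0 := by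
    rw [← htot, Finset.sum_congr rfl fun b _ => hconst b, Finset.sum_const,
      Finset.card_univ, Fintype.card_fin, nsmul_eq_mul]
  have hn : (n : ℝ) ≠ 0 := by
    have := a.pos
    positivity
  exact (mul_eq_zero.mp htot').resolve_left hn

variable {x y : Fin n → Fin p → ℝ} {F : (Fin n → Fin p → ℝ) → ℝ}

lemma cfg_mul (hF : ∀ (σ : Equiv.Perm (Fin n)) v, F (v ∘ σ) = F v)
    (σ τ : Equiv.Perm (Fin n)) (j : ℕ)
    (hτ : ∀ k : Fin n, ((τ k : ℕ) < j ↔ (k : ℕ) < j)) :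
    F (cfg x y (σ * τ) j) = F (cfg x y σ j) := by
  rw [← hF τ (cfg x y σ j)]
  congr 1
  funext k
  simp only [cfg, Function.comp_apply, Equiv.Perm.mul_apply]
  by_cases hk : (k : ℕ) < j
  · rw [if_pos hk, if_pos ((hτ k).mpr hk)]
  · rw [if_neg hk, if_neg (fun hc => hk ((hτ k).mp hc))]

lemma sumP_swap (hF : ∀ (σ : Equiv.Perm (Fin n)) v, F (v ∘ σ) = F v)
    (h : Fin n → ℝ) (j : ℕ) (a b : Fin n) (hab : ((a : ℕ) < j ↔ (b : ℕ) < j)) :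
    ∑ σ : Equiv.Perm (Fin n), F (cfg x y σ j) * h (σ a)
      = ∑ σ : Equiv.Perm (Fin n), F (cfg x y σ j) * h (σ b) := by
  have hτ : ∀ k : Fin n, ((Equiv.swap a b k : ℕ) < j ↔ (k : ℕ) < j) := by
    intro k
    rcases eq_or_ne k a with rfl | hka
    · rw [Equiv.swap_apply_left]; exact hab.symm
    rcases eq_or_ne k b with rfl | hkb
    · rw [Equiv.swap_apply_right]; exact hab
    · rw [Equiv.swap_apply_of_ne_of_ne hka hkb]
  calc ∑ σ : Equiv.Perm (Fin n), F (cfg x y σ j) * h (σ a)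
      = ∑ σ : Equiv.Perm (Fin n), F (cfg x y (σ * Equiv.swap a b) j) * h ((σ * Equiv.swap a b) a) :=
        (sum_perm_mulRight (Equiv.swap a b) (fun σ => F (cfg x y σ j) * h (σ a))).symm
    _ = ∑ σ : Equiv.Perm (Fin n), F (cfg x y σ j) * h (σ b) := by
        refine Finset.sum_congr rfl fun σ _ => ?_
        rw [cfg_mul hF σ _ j hτ, Equiv.Perm.mul_apply, Equiv.swap_apply_left]

lemma sumP_balance (hF : ∀ (σ : Equiv.Perm (Fin n)) v, F (v ∘ σ) = F v)
    (h : Fin n → ℝ) (hh : ∑ k, h k = 0) (j : ℕ) (a b : Fin n)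
    (ha : (a : ℕ) < j) (hb : j ≤ (b : ℕ)) :
    (j : ℝ) * (∑ σ : Equiv.Perm (Fin n), F (cfg x y σ j) * h (σ a))
      + ((n : ℝ) - j) * (∑ σ : Equiv.Perm (Fin n), F (cfg x y σ j) * h (σ b)) = 0 := by
  have hjn : j ≤ n := le_of_lt (lt_of_le_of_lt hb b.isLt)
  have htot : ∑ c : Fin n, ∑ σ : Equiv.Perm (Fin n), F (cfg x y σ j) * h (σ c) = 0 := by
    rw [Finset.sum_comm]
    refine Finset.sum_eq_zero fun σ _ => ?_
    rw [← Finset.mul_sum, Equiv.sum_comp σ h, hh, mul_zero]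
  have hsplit : ∑ c : Fin n, ∑ σ : Equiv.Perm (Fin n), F (cfg x y σ j) * h (σ c)
      = ∑ c : Fin n, (if (c : ℕ) < j then (∑ σ : Equiv.Perm (Fin n), F (cfg x y σ j) * h (σ a))
          else (∑ σ : Equiv.Perm (Fin n), F (cfg x y σ j) * h (σ b))) := by
    refine Finset.sum_congr rfl fun c _ => ?_
    by_cases hc : (c : ℕ) < j
    · rw [if_pos hc]; exact sumP_swap hF h j c a (iff_of_true hc ha)
    · rw [if_neg hc]; exact sumP_swap hF h j c b (iff_of_false hc (not_lt.mpr hb))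
  have hcount : ∀ (c1 c2 : ℝ), ∑ c : Fin n, (if (c : ℕ) < j then c1 else c2)
      = (j : ℝ) * c1 + ((n : ℝ) - j) * c2 := by
    intro c1 c2
    rw [Fin.sum_univ_eq_sum_range (fun t => if t < j then c1 else c2),
      Finset.range_eq_Ico, ← Finset.sum_Ico_consecutive _ (Nat.zero_le j) hjn]
    have h1 : ∑ t ∈ Finset.Ico 0 j, (if t < j then c1 else c2) = (j : ℝ) * c1 := by
      rw [Finset.sum_congr rfl fun t ht => if_pos (Finset.mem_Ico.mp ht).2,
        Finset.sum_const, Nat.card_Ico, Nat.sub_zero, nsmul_eq_mul]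
    have h2 : ∑ t ∈ Finset.Ico j n, (if t < j then c1 else c2) = ((n : ℝ) - j) * c2 := by
      rw [Finset.sum_congr rfl fun t ht => if_neg (not_lt.mpr (Finset.mem_Ico.mp ht).1),
        Finset.sum_const, Nat.card_Ico, nsmul_eq_mul, Nat.cast_sub hjn]
    rw [h1, h2]
  rw [hsplit, hcount] at htot
  exact htot

lemma sumP_bot (hF : ∀ (σ : Equiv.Perm (Fin n)) v, F (v ∘ σ) = F v)
    (h : Fin n → ℝ) (hh : ∑ k, h k = 0) (a : Fin n) :
    ∑ σ : Equiv.Perm (Fin n), F (cfg x y σ 0) * h (σ a) = 0 := by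
  have hc : ∀ σ : Equiv.Perm (Fin n), F (cfg x y σ 0) = F y := by
    intro σ
    have : cfg x y σ 0 = y ∘ σ := by funext k; simp [cfg]
    rw [this, hF]
  rw [Finset.sum_congr rfl fun σ _ => by rw [hc σ], ← Finset.mul_sum,
    sum_perm_apply_eq_zero h hh a, mul_zero]

lemma sumP_top (hF : ∀ (σ : Equiv.Perm (Fin n)) v, F (v ∘ σ) = F v)
    (h : Fin n → ℝ) (hh : ∑ k, h k = 0) (j : ℕ) (hj : n ≤ j) (a : Fin n) :
    ∑ σ : Equiv.Perm (Fin n), F (cfg x y σ j) * h (σ a) = 0 := by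
  have hc : ∀ σ : Equiv.Perm (Fin n), F (cfg x y σ j) = F x := by
    intro σ
    have : cfg x y σ j = x ∘ σ := by
      funext k
      simp only [cfg, Function.comp_apply]
      rw [if_pos (lt_of_lt_of_le k.isLt hj)]
    rw [this, hF]
  rw [Finset.sum_congr rfl fun σ _ => by rw [hc σ], ← Finset.mul_sum,
    sum_perm_apply_eq_zero h hh a, mul_zero]


section
variable (x y : Fin n → Fin p → ℝ) (F : (Fin n → Fin p → ℝ) → ℝ) (h : Fin n → ℝ)

/-- `∑_σ F(cfg σ j) h(σ a)`, with out-of-range `a` mapped to `0`. -/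
def PP (j a : ℕ) : ℝ :=
  if ha : a < n then ∑ σ : Equiv.Perm (Fin n), F (cfg x y σ j) * h (σ ⟨a, ha⟩) else 0

variable (q θ : Fin n → ℝ)

def QT (t : ℕ) : ℝ := if ht : t < n then q ⟨t, ht⟩ * θ ⟨t, ht⟩ else 0
def RT (t : ℕ) : ℝ := if ht : t < n then q ⟨t, ht⟩ * (1 - θ ⟨t, ht⟩) else 0
end


lemma core (x y : Fin n → Fin p → ℝ) (q θ : Fin n → ℝ)
    (hqθ : ∀ (i : ℕ) (h1 : 1 ≤ i) (h : i < n),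
      ((n : ℝ) - i) * q ⟨i - 1, Nat.lt_of_le_of_lt (Nat.sub_le i 1) h⟩ * θ ⟨i - 1, Nat.lt_of_le_of_lt (Nat.sub_le i 1) h⟩
        = (i : ℝ) * q ⟨i, h⟩ * (1 - θ ⟨i, h⟩))
    {F : (Fin n → Fin p → ℝ) → ℝ} (hF : ∀ (σ : Equiv.Perm (Fin n)) v, F (v ∘ σ) = F v)
    (h : Fin n → ℝ) (hh : ∑ k, h k = 0) :
    ∑ i : Fin n, (q i * θ i * (∑ σ : Equiv.Perm (Fin n), F (cfg x y σ ((i : ℕ) + 1)) * h (σ i))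
      + q i * (1 - θ i) * (∑ σ : Equiv.Perm (Fin n), F (cfg x y σ (i : ℕ)) * h (σ i))) = 0 := by
  have hrw : ∀ i : Fin n,
      q i * θ i * (∑ σ : Equiv.Perm (Fin n), F (cfg x y σ ((i : ℕ) + 1)) * h (σ i))
        + q i * (1 - θ i) * (∑ σ : Equiv.Perm (Fin n), F (cfg x y σ (i : ℕ)) * h (σ i))
      = QT q θ (i : ℕ) * PP x y F h ((i : ℕ) + 1) (i : ℕ)
        + RT q θ (i : ℕ) * PP x y F h (i : ℕ) (i : ℕ) := by
    intro i
    simp only [QT, RT, PP, dif_pos i.isLt, Fin.eta]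
  rw [Finset.sum_congr rfl fun i _ => hrw i,
    Fin.sum_univ_eq_sum_range (fun t => QT q θ t * PP x y F h (t + 1) t + RT q θ t * PP x y F h t t)]
  have key : ∀ t : ℕ, QT q θ t * PP x y F h (t + 1) t = -(RT q θ (t + 1) * PP x y F h (t + 1) (t + 1)) := by
    intro t
    rcases lt_trichotomy (t + 1) n with hlt | heq | hgt
    · have htn : t < n := by omega
      have hq := hqθ (t + 1) (by omega) hlt
      have hbal := sumP_balance (x := x) (y := y) hF h hh (t + 1) ⟨t, htn⟩ ⟨t + 1, hlt⟩
        (by simp) (by simp)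
      simp only [QT, RT, PP, dif_pos htn, dif_pos hlt]
      have hne : ((t : ℝ) + 1) ≠ 0 := by positivity
      apply mul_left_cancel₀ hne
      push_cast at hq hbal ⊢
      linear_combination (q ⟨t, htn⟩ * θ ⟨t, htn⟩) * hbal
        - (∑ σ : Equiv.Perm (Fin n), F (cfg x y σ (t + 1)) * h (σ ⟨t + 1, hlt⟩)) * hq
    · have htn : t < n := by omega
      have h1 : RT q θ (t + 1) = 0 := by simp [RT, heq]
      have h2 : PP x y F h (t + 1) t = 0 := by
        simp only [PP, dif_pos htn]
        exact sumP_top hF h hh (t + 1) (by omega) ⟨t, htn⟩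
      rw [h1, h2, mul_zero, zero_mul, neg_zero]
    · have h1 : QT q θ t = 0 := by simp only [QT]; rw [dif_neg (by omega)]
      have h2 : RT q θ (t + 1) = 0 := by simp only [RT]; rw [dif_neg (by omega)]
      rw [h1, h2, zero_mul, zero_mul, neg_zero]
  have step : ∀ t : ℕ, QT q θ t * PP x y F h (t + 1) t + RT q θ t * PP x y F h t t
      = RT q θ t * PP x y F h t t - RT q θ (t + 1) * PP x y F h (t + 1) (t + 1) := by
    intro t; rw [key t]; ring
  rw [Finset.sum_congr rfl fun t _ => step t,
    Finset.sum_range_sub' (fun t => RT q θ t * PP x y F h t t) n]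
  have h1 : RT q θ n = 0 := by simp only [RT]; rw [dif_neg (lt_irrefl n)]
  have h2 : PP x y F h 0 0 = 0 := by
    by_cases h0 : 0 < n
    · simp only [PP, dif_pos h0]
      exact sumP_bot hF h hh ⟨0, h0⟩
    · simp only [PP, dif_neg h0]
  rw [h1, h2, mul_zero, zero_mul, sub_zero]


lemma perNu (x y : Fin n → Fin p → ℝ) (q θ : Fin n → ℝ)
    (hqθ : ∀ (i : ℕ) (h1 : 1 ≤ i) (h : i < n),
      ((n : ℝ) - i) * q ⟨i - 1, Nat.lt_of_le_of_lt (Nat.sub_le i 1) h⟩ * θ ⟨i - 1, Nat.lt_of_le_of_lt (Nat.sub_le i 1) h⟩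
        = (i : ℝ) * q ⟨i, h⟩ * (1 - θ ⟨i, h⟩))
    {F : (Fin n → Fin p → ℝ) → ℝ} (hF : ∀ (σ : Equiv.Perm (Fin n)) v, F (v ∘ σ) = F v)
    (h : Fin n → ℝ) (hn : 0 < n) :
    ∑ i : Fin n, q i * ∑ σ : Equiv.Perm (Fin n),
        (θ i * F (cfg x y σ ((i : ℕ) + 1)) + (1 - θ i) * F (cfg x y σ (i : ℕ))) * h (σ i)
      = (∑ i : Fin n, q i * ∑ σ : Equiv.Perm (Fin n),
          (θ i * F (cfg x y σ ((i : ℕ) + 1)) + (1 - θ i) * F (cfg x y σ (i : ℕ))))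
        * ((n : ℝ)⁻¹ * ∑ k, h k) := by
  set c := (n : ℝ)⁻¹ * ∑ k, h k with hcdef
  have hncast : (n : ℝ) ≠ 0 := Nat.cast_ne_zero.mpr hn.ne'
  have hcent : ∑ k : Fin n, (h k - c) = 0 := by
    rw [Finset.sum_sub_distrib, Finset.sum_const, Finset.card_univ, Fintype.card_fin,
      nsmul_eq_mul, hcdef]
    field_simp
    ring
  have hcore := core x y q θ hqθ hF (fun k => h k - c) hcent
  have sub1 : ∀ (G u : Equiv.Perm (Fin n) → ℝ),
      ∑ σ : Equiv.Perm (Fin n), G σ * (u σ - c)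
        = (∑ σ : Equiv.Perm (Fin n), G σ * u σ) - (∑ σ : Equiv.Perm (Fin n), G σ) * c := by
    intro G u
    simp only [mul_sub, Finset.sum_sub_distrib, Finset.sum_mul]
  have hcore' : ∑ i : Fin n,
      (q i * θ i * ((∑ σ : Equiv.Perm (Fin n), F (cfg x y σ ((i : ℕ) + 1)) * h (σ i))
          - (∑ σ : Equiv.Perm (Fin n), F (cfg x y σ ((i : ℕ) + 1))) * c)
        + q i * (1 - θ i) * ((∑ σ : Equiv.Perm (Fin n), F (cfg x y σ (i : ℕ)) * h (σ i))
          - (∑ σ : Equiv.Perm (Fin n), F (cfg x y σ (i : ℕ))) * c)) = 0 := by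
    rw [← hcore]
    refine Finset.sum_congr rfl fun i _ => ?_
    rw [← sub1 (fun σ => F (cfg x y σ ((i : ℕ) + 1))) (fun σ => h (σ i)),
      ← sub1 (fun σ => F (cfg x y σ (i : ℕ))) (fun σ => h (σ i))]
  have expand2 : ∀ i : Fin n, ∑ σ : Equiv.Perm (Fin n),
      (θ i * F (cfg x y σ ((i : ℕ) + 1)) + (1 - θ i) * F (cfg x y σ (i : ℕ))) * h (σ i)
      = θ i * (∑ σ : Equiv.Perm (Fin n), F (cfg x y σ ((i : ℕ) + 1)) * h (σ i))
        + (1 - θ i) * (∑ σ : Equiv.Perm (Fin n), F (cfg x y σ (i : ℕ)) * h (σ i)) := by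
    intro i
    rw [Finset.mul_sum, Finset.mul_sum, ← Finset.sum_add_distrib]
    exact Finset.sum_congr rfl fun σ _ => by ring
  have expand3 : ∀ i : Fin n, ∑ σ : Equiv.Perm (Fin n),
      (θ i * F (cfg x y σ ((i : ℕ) + 1)) + (1 - θ i) * F (cfg x y σ (i : ℕ)))
      = θ i * (∑ σ : Equiv.Perm (Fin n), F (cfg x y σ ((i : ℕ) + 1)))
        + (1 - θ i) * (∑ σ : Equiv.Perm (Fin n), F (cfg x y σ (i : ℕ))) := by
    intro i
    rw [Finset.mul_sum, Finset.mul_sum, ← Finset.sum_add_distrib]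
  have L1 : ∑ i : Fin n, q i * ∑ σ : Equiv.Perm (Fin n),
        (θ i * F (cfg x y σ ((i : ℕ) + 1)) + (1 - θ i) * F (cfg x y σ (i : ℕ))) * h (σ i)
      = ∑ i : Fin n, q i * (θ i * (∑ σ : Equiv.Perm (Fin n), F (cfg x y σ ((i : ℕ) + 1)) * h (σ i))
          + (1 - θ i) * (∑ σ : Equiv.Perm (Fin n), F (cfg x y σ (i : ℕ)) * h (σ i))) :=
    Finset.sum_congr rfl fun i _ => by rw [expand2 i]
  have R1 : ∑ i : Fin n, q i * ∑ σ : Equiv.Perm (Fin n),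
        (θ i * F (cfg x y σ ((i : ℕ) + 1)) + (1 - θ i) * F (cfg x y σ (i : ℕ)))
      = ∑ i : Fin n, q i * (θ i * (∑ σ : Equiv.Perm (Fin n), F (cfg x y σ ((i : ℕ) + 1)))
          + (1 - θ i) * (∑ σ : Equiv.Perm (Fin n), F (cfg x y σ (i : ℕ)))) :=
    Finset.sum_congr rfl fun i _ => by rw [expand3 i]
  rw [L1, R1, Finset.sum_mul, ← sub_eq_zero, ← Finset.sum_sub_distrib]
  refine Eq.trans (Finset.sum_congr rfl fun i _ => ?_) hcore'
  ring

lemma integral_bernoulli {Ωδ : Type*} [MeasurableSpace Ωδ] (μδ : Measure Ωδ)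
    [IsProbabilityMeasure μδ] (d : Ωδ → ℝ) (hmeas : Measurable d)
    (h01 : ∀ ω, d ω = 0 ∨ d ω = 1) (θ : ℝ) (hθ0 : 0 ≤ θ) (hθ1 : θ ≤ 1)
    (hb : μδ {ω | d ω = 1} = ENNReal.ofReal θ) (F : ℝ → ℝ) :
    ∫ ω, F (d ω) ∂μδ = θ * F 1 + (1 - θ) * F 0 := by
  have hs : MeasurableSet {ω | d ω = 1} := hmeas (measurableSet_singleton 1)
  have hfun : (fun ω => F (d ω))
      = fun ω => Set.indicator {ω | d ω = 1} (fun _ => F 1) ω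
          + Set.indicator {ω | d ω = 1}ᶜ (fun _ => F 0) ω := by
    funext ω
    rcases h01 ω with h0 | h1
    · have hmem : ω ∉ {ω | d ω = 1} := by simp [h0]
      rw [Set.indicator_of_notMem hmem, Set.indicator_of_mem (Set.mem_compl hmem), h0, zero_add]
    · have hmem : ω ∈ {ω | d ω = 1} := h1
      rw [Set.indicator_of_mem hmem, Set.indicator_of_notMem (Set.notMem_compl_iff.mpr hmem), h1, add_zero]
  rw [hfun, integral_add ((integrable_const (F 1)).indicator hs)
    ((integrable_const (F 0)).indicator hs.compl),
    integral_indicator_const _ hs, integral_indicator_const _ hs.compl,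
    measureReal_def, measureReal_def, measure_compl hs (measure_ne_top μδ _), hb, measure_univ]
  rw [smul_eq_mul, smul_eq_mul, ENNReal.toReal_ofReal hθ0,
    ENNReal.toReal_sub_of_le (by simpa using ENNReal.ofReal_le_one.mpr hθ1) ENNReal.one_ne_top,
    ENNReal.toReal_one, ENNReal.toReal_ofReal hθ0]


lemma lind_one (x y : Fin n → Fin p → ℝ) (σ : Equiv.Perm (Fin n)) (i : Fin n) :
    lindVec x y σ i (fun j => 1 * x (σ i) j + (1 - 1) * y (σ i) j)
      = cfg x y σ ((i : ℕ) + 1) := by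
  funext k
  simp only [lindVec, cfg]
  rcases lt_trichotomy k i with hk | hk | hk
  · rw [if_pos hk, if_pos (by omega : (k : ℕ) < (i : ℕ) + 1)]
  · subst hk
    rw [if_neg (lt_irrefl k), if_pos rfl, if_pos (by omega : (k : ℕ) < (k : ℕ) + 1)]
    funext j; ring
  · rw [if_neg (not_lt.mpr hk.le), if_neg hk.ne',
      if_neg (by have := (Fin.lt_def.mp hk); omega : ¬ ((k : ℕ) < (i : ℕ) + 1))]

lemma lind_zero (x y : Fin n → Fin p → ℝ) (σ : Equiv.Perm (Fin n)) (i : Fin n) :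
    lindVec x y σ i (fun j => 0 * x (σ i) j + (1 - 0) * y (σ i) j)
      = cfg x y σ (i : ℕ) := by
  funext k
  simp only [lindVec, cfg]
  rcases lt_trichotomy k i with hk | hk | hk
  · rw [if_pos hk, if_pos (Fin.lt_def.mp hk)]
  · subst hk
    rw [if_neg (lt_irrefl k), if_pos rfl, if_neg (lt_irrefl (k : ℕ))]
    funext j; ring
  · rw [if_neg (not_lt.mpr hk.le), if_neg hk.ne',
      if_neg (by have := (Fin.lt_def.mp hk); omega : ¬ ((k : ℕ) < (i : ℕ)))]

lemma swap_out {α β : Type*} [Fintype α] [Fintype β] (u : α → ℝ) (t : α → β → ℝ) :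
    ∑ i : α, u i * ∑ ν : β, t i ν = ∑ ν : β, ∑ i : α, u i * t i ν := by
  rw [show (∑ i : α, u i * ∑ ν : β, t i ν) = ∑ i : α, ∑ ν : β, u i * t i ν from
    Finset.sum_congr rfl fun i _ => by rw [Finset.mul_sum]]
  exact Finset.sum_comm



/-- **Permutation Invariance Lemma (Lemma 3.1, consequence).**
Under the assumptions of the Permutation Invariance Lemma, for any tensors
`g_k, 1 ≤ k ≤ n` (functions of the conditioned-upon data):
`A_{σ,i}[ q_{n,i} ⟨f(U_{σ,i}, ζ_{i,σ_i}), g_{σ_i}⟩ ]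
  = ⟨ A_{σ,i}[ q_{n,i} f(U_{σ,i}, ζ_{i,σ_i}) ], n⁻¹ Σ_k g_k ⟩`,
where `A_{σ,i}(·) = n⁻¹ Σᵢ (n!)⁻¹ Σ_σ E[ · | X, Y, σ, i ]` and `⟨·,·⟩` is the
vectorized inner product of tensors. -/
theorem permutation_invariance_consequence
    {Ωδ : Type*} [MeasurableSpace Ωδ] (μδ : Measure Ωδ) [IsProbabilityMeasure μδ]
    (x y : Fin n → Fin p → ℝ)
    (q θ : Fin n → ℝ) (hθ : ∀ i, θ i ∈ Set.Icc (0 : ℝ) 1)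
    (hqθ : ∀ (i : ℕ) (h1 : 1 ≤ i) (h : i < n),
      ((n : ℝ) - i) * q ⟨i - 1, by omega⟩ * θ ⟨i - 1, by omega⟩
        = (i : ℝ) * q ⟨i, h⟩ * (1 - θ ⟨i, h⟩))
    (δ : Fin n → Ωδ → ℝ)
    (hδmeas : ∀ i, Measurable (δ i))
    (hδ01 : ∀ i ω, δ i ω = 0 ∨ δ i ω = 1)
    (hδindep : ProbabilityTheory.iIndepFun δ μδ)
    (hδbern : ∀ i, μδ {ω | δ i ω = 1} = ENNReal.ofReal (θ i))
    (f : (Fin n → Fin p → ℝ) → (Fin m → Fin p) → ℝ) (hf : PermInvariantT f)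
    (g : Fin n → (Fin m → Fin p) → ℝ) :
    (n : ℝ)⁻¹ * ∑ i : Fin n, ((n.factorial : ℝ))⁻¹ * ∑ σ : Equiv.Perm (Fin n),
      ∫ ω, q i * ∑ ν : Fin m → Fin p,
        f (lindVec x y σ i (fun j => δ i ω * x (σ i) j + (1 - δ i ω) * y (σ i) j)) ν
          * g (σ i) ν ∂μδ
    = ∑ ν : Fin m → Fin p,
        ((n : ℝ)⁻¹ * ∑ i : Fin n, ((n.factorial : ℝ))⁻¹ * ∑ σ : Equiv.Perm (Fin n),
          ∫ ω, q i *
            f (lindVec x y σ i (fun j => δ i ω * x (σ i) j + (1 - δ i ω) * y (σ i) j)) ν ∂μδ)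
        * ((n : ℝ)⁻¹ * ∑ k, g k ν) := by
  rcases Nat.eq_zero_or_pos n with hn0 | hn
  · subst hn0
    simp
  · have hint1 : ∀ (i : Fin n) (σ : Equiv.Perm (Fin n)),
        (∫ ω, q i * ∑ ν : Fin m → Fin p,
          f (lindVec x y σ i (fun j => δ i ω * x (σ i) j + (1 - δ i ω) * y (σ i) j)) ν
            * g (σ i) ν ∂μδ)
        = q i * ∑ ν : Fin m → Fin p,
            (θ i * f (cfg x y σ ((i : ℕ) + 1)) ν + (1 - θ i) * f (cfg x y σ (i : ℕ)) ν)
              * g (σ i) ν := by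
      intro i σ
      have hib := integral_bernoulli μδ (δ i) (hδmeas i) (hδ01 i) (θ i) (hθ i).1 (hθ i).2
        (hδbern i)
        (fun t => q i * ∑ ν : Fin m → Fin p,
          f (lindVec x y σ i (fun j => t * x (σ i) j + (1 - t) * y (σ i) j)) ν * g (σ i) ν)
      simp only [lind_one, lind_zero] at hib
      rw [hib]
      have hsplit : ∑ ν : Fin m → Fin p,
          (θ i * f (cfg x y σ ((i : ℕ) + 1)) ν + (1 - θ i) * f (cfg x y σ (i : ℕ)) ν)
            * g (σ i) ν
          = θ i * (∑ ν : Fin m → Fin p, f (cfg x y σ ((i : ℕ) + 1)) ν * g (σ i) ν)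
            + (1 - θ i) * (∑ ν : Fin m → Fin p, f (cfg x y σ (i : ℕ)) ν * g (σ i) ν) := by
        rw [Finset.mul_sum, Finset.mul_sum, ← Finset.sum_add_distrib]
        exact Finset.sum_congr rfl fun ν _ => by ring
      rw [hsplit]
      ring
    have hint2 : ∀ (i : Fin n) (σ : Equiv.Perm (Fin n)) (ν : Fin m → Fin p),
        (∫ ω, q i *
            f (lindVec x y σ i (fun j => δ i ω * x (σ i) j + (1 - δ i ω) * y (σ i) j)) ν ∂μδ)
        = q i * (θ i * f (cfg x y σ ((i : ℕ) + 1)) ν + (1 - θ i) * f (cfg x y σ (i : ℕ)) ν) := by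
      intro i σ ν
      have hib := integral_bernoulli μδ (δ i) (hδmeas i) (hδ01 i) (θ i) (hθ i).1 (hθ i).2
        (hδbern i)
        (fun t => q i *
          f (lindVec x y σ i (fun j => t * x (σ i) j + (1 - t) * y (σ i) j)) ν)
      simp only [lind_one, lind_zero] at hib
      rw [hib]
      ring
    have hkey : ∀ ν : Fin m → Fin p,
        ∑ i : Fin n, q i * ∑ σ : Equiv.Perm (Fin n),
            (θ i * f (cfg x y σ ((i : ℕ) + 1)) ν + (1 - θ i) * f (cfg x y σ (i : ℕ)) ν)
              * g (σ i) ν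
          = (∑ i : Fin n, q i * ∑ σ : Equiv.Perm (Fin n),
              (θ i * f (cfg x y σ ((i : ℕ) + 1)) ν + (1 - θ i) * f (cfg x y σ (i : ℕ)) ν))
            * ((n : ℝ)⁻¹ * ∑ k, g k ν) := by
      intro ν
      have := perNu x y q θ hqθ (F := fun v => f v ν)
        (fun σ v => congrFun (hf σ v) ν) (fun k => g k ν) hn
      simpa using this
    have swap_i_nu : ∀ (i : Fin n),
        ∑ σ : Equiv.Perm (Fin n), (q i * ∑ ν : Fin m → Fin p,
          (θ i * f (cfg x y σ ((i : ℕ) + 1)) ν + (1 - θ i) * f (cfg x y σ (i : ℕ)) ν)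
            * g (σ i) ν)
        = ∑ ν : Fin m → Fin p, (q i * ∑ σ : Equiv.Perm (Fin n),
          (θ i * f (cfg x y σ ((i : ℕ) + 1)) ν + (1 - θ i) * f (cfg x y σ (i : ℕ)) ν)
            * g (σ i) ν) := by
      intro i
      calc ∑ σ : Equiv.Perm (Fin n), (q i * ∑ ν : Fin m → Fin p,
            (θ i * f (cfg x y σ ((i : ℕ) + 1)) ν + (1 - θ i) * f (cfg x y σ (i : ℕ)) ν)
              * g (σ i) ν)
          = ∑ σ : Equiv.Perm (Fin n), ∑ ν : Fin m → Fin p, q i *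
            ((θ i * f (cfg x y σ ((i : ℕ) + 1)) ν + (1 - θ i) * f (cfg x y σ (i : ℕ)) ν)
              * g (σ i) ν) :=
          Finset.sum_congr rfl fun σ _ => by rw [Finset.mul_sum]
        _ = ∑ ν : Fin m → Fin p, ∑ σ : Equiv.Perm (Fin n), q i *
            ((θ i * f (cfg x y σ ((i : ℕ) + 1)) ν + (1 - θ i) * f (cfg x y σ (i : ℕ)) ν)
              * g (σ i) ν) := Finset.sum_comm
        _ = ∑ ν : Fin m → Fin p, (q i * ∑ σ : Equiv.Perm (Fin n),
            (θ i * f (cfg x y σ ((i : ℕ) + 1)) ν + (1 - θ i) * f (cfg x y σ (i : ℕ)) ν)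
              * g (σ i) ν) :=
          Finset.sum_congr rfl fun ν _ => by rw [← Finset.mul_sum]
    calc (n : ℝ)⁻¹ * ∑ i : Fin n, ((n.factorial : ℝ))⁻¹ * ∑ σ : Equiv.Perm (Fin n),
        ∫ ω, q i * ∑ ν : Fin m → Fin p,
          f (lindVec x y σ i (fun j => δ i ω * x (σ i) j + (1 - δ i ω) * y (σ i) j)) ν
            * g (σ i) ν ∂μδ
        = (n : ℝ)⁻¹ * ∑ i : Fin n, ((n.factorial : ℝ))⁻¹ * ∑ σ : Equiv.Perm (Fin n),
            (q i * ∑ ν : Fin m → Fin p,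
              (θ i * f (cfg x y σ ((i : ℕ) + 1)) ν + (1 - θ i) * f (cfg x y σ (i : ℕ)) ν)
                * g (σ i) ν) :=
        congrArg (fun z => (n : ℝ)⁻¹ * z) (Finset.sum_congr rfl fun i _ =>
          congrArg (fun z => ((n.factorial : ℝ))⁻¹ * z)
            (Finset.sum_congr rfl fun σ _ => hint1 i σ))
      _ = (n : ℝ)⁻¹ * ∑ i : Fin n, ((n.factorial : ℝ))⁻¹ *
            ∑ ν : Fin m → Fin p, (q i * ∑ σ : Equiv.Perm (Fin n),
              (θ i * f (cfg x y σ ((i : ℕ) + 1)) ν + (1 - θ i) * f (cfg x y σ (i : ℕ)) ν)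
                * g (σ i) ν) :=
        congrArg (fun z => (n : ℝ)⁻¹ * z) (Finset.sum_congr rfl fun i _ =>
          congrArg (fun z => ((n.factorial : ℝ))⁻¹ * z) (swap_i_nu i))
      _ = (n : ℝ)⁻¹ * ∑ i : Fin n, ∑ ν : Fin m → Fin p, ((n.factorial : ℝ))⁻¹ *
            (q i * ∑ σ : Equiv.Perm (Fin n),
              (θ i * f (cfg x y σ ((i : ℕ) + 1)) ν + (1 - θ i) * f (cfg x y σ (i : ℕ)) ν)
                * g (σ i) ν) :=
        congrArg (fun z => (n : ℝ)⁻¹ * z) (Finset.sum_congr rfl fun i _ => by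
          rw [Finset.mul_sum])
      _ = (n : ℝ)⁻¹ * ∑ ν : Fin m → Fin p, ∑ i : Fin n, ((n.factorial : ℝ))⁻¹ *
            (q i * ∑ σ : Equiv.Perm (Fin n),
              (θ i * f (cfg x y σ ((i : ℕ) + 1)) ν + (1 - θ i) * f (cfg x y σ (i : ℕ)) ν)
                * g (σ i) ν) :=
        congrArg (fun z => (n : ℝ)⁻¹ * z) Finset.sum_comm
      _ = ∑ ν : Fin m → Fin p, (n : ℝ)⁻¹ * (((n.factorial : ℝ))⁻¹ *
            ∑ i : Fin n, q i * ∑ σ : Equiv.Perm (Fin n),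
              (θ i * f (cfg x y σ ((i : ℕ) + 1)) ν + (1 - θ i) * f (cfg x y σ (i : ℕ)) ν)
                * g (σ i) ν) := by
        rw [Finset.mul_sum]
        exact Finset.sum_congr rfl fun ν _ => by rw [← Finset.mul_sum]
      _ = ∑ ν : Fin m → Fin p, (n : ℝ)⁻¹ * (((n.factorial : ℝ))⁻¹ *
            ((∑ i : Fin n, q i * ∑ σ : Equiv.Perm (Fin n),
              (θ i * f (cfg x y σ ((i : ℕ) + 1)) ν + (1 - θ i) * f (cfg x y σ (i : ℕ)) ν))
              * ((n : ℝ)⁻¹ * ∑ k, g k ν))) :=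
        Finset.sum_congr rfl fun ν _ => by rw [hkey ν]
      _ = ∑ ν : Fin m → Fin p,
          ((n : ℝ)⁻¹ * ∑ i : Fin n, ((n.factorial : ℝ))⁻¹ * ∑ σ : Equiv.Perm (Fin n),
            ∫ ω, q i *
              f (lindVec x y σ i (fun j => δ i ω * x (σ i) j + (1 - δ i ω) * y (σ i) j)) ν ∂μδ)
          * ((n : ℝ)⁻¹ * ∑ k, g k ν) := by
        refine Finset.sum_congr rfl fun ν _ => ?_
        have hR : ∑ i : Fin n, ((n.factorial : ℝ))⁻¹ * ∑ σ : Equiv.Perm (Fin n),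
            (∫ ω, q i *
              f (lindVec x y σ i (fun j => δ i ω * x (σ i) j + (1 - δ i ω) * y (σ i) j)) ν ∂μδ)
            = ((n.factorial : ℝ))⁻¹ * ∑ i : Fin n, q i * ∑ σ : Equiv.Perm (Fin n),
              (θ i * f (cfg x y σ ((i : ℕ) + 1)) ν + (1 - θ i) * f (cfg x y σ (i : ℕ)) ν) := by
          rw [Finset.mul_sum]
          refine Finset.sum_congr rfl fun i _ => ?_
          rw [Finset.sum_congr rfl fun σ _ => hint2 i σ ν, ← Finset.mul_sum]
        rw [hR]
        ring

end Stmt9
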